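/- The map t = (t_1,…,t_N) ↦ η(t) is differentiable on [0,∞)^N and its Jacobian determinant satisfies det(∂η/∂(t_1,…,t_N))(t) = λ^N (v*)^N ∏_{k=1}^N e^{−λ(s_N − s_{k−1})} for every t; in particular the Jacobian determinant is strictly positive for all t_1,…,t_N, so it never vanishes. -/

import Mathlib

noncomputable section

/-- The explicit coordinatewise flow `γ_t(x)^j = e^{-λt} x^j + (1-e^{-λt}) v*` of the drift
`b^j(x) = -λ(x^j - v*)`. -/
def neuronFlow (N : ℕ) (lam vstar : ℝ) (t : ℝ) (x : Fin N → ℝ) : Fin N → ℝ :=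
  fun j => Real.exp (-(lam * t)) * x j + (1 - Real.exp (-(lam * t))) * vstar

/-- The jump map `Δ_i` (with 1-based index `i`) : coordinate `i` is reset to `0` and every
other coordinate `j` receives the weight `W_{i→j}`. -/
def neuronJump (N : ℕ) (W : ℕ → ℕ → ℝ) (i : ℕ) (x : Fin N → ℝ) : Fin N → ℝ :=
  fun j => if (j : ℕ) + 1 = i then 0 else x j + W i ((j : ℕ) + 1)

/-- `neuronChain N lam vstar W y t k = x_k`, where `x_0 = Δ_1(y)` and
`x_k = Δ_{k+1}(γ_{t_k}(x_{k-1}))` (particles jump in the order `1, 2, …, N`); the time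
vector is 0-indexed, i.e. `t k` stands for `t_{k+1}`. -/
def neuronChain (N : ℕ) (lam vstar : ℝ) (W : ℕ → ℕ → ℝ) (y : Fin N → ℝ)
    (t : ℕ → ℝ) : ℕ → (Fin N → ℝ)
  | 0 => neuronJump N W 1 y
  | k + 1 =>
      neuronJump N W (k + 2) (neuronFlow N lam vstar (t k) (neuronChain N lam vstar W y t k))

/-- `η(t) = γ_{t_N}(x_{N-1})`, as a function of the full time vector `t = (t_1,…,t_N)`
(here `t j` stands for `t_{j+1}`). -/
def neuronEta (N : ℕ) (lam vstar : ℝ) (W : ℕ → ℕ → ℝ) (y : Fin N → ℝ)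
    (t : Fin N → ℝ) : Fin N → ℝ :=
  neuronFlow N lam vstar ((fun k => if h : k < N then t ⟨k, h⟩ else 0) (N - 1))
    (neuronChain N lam vstar W y (fun k => if h : k < N then t ⟨k, h⟩ else 0) (N - 1))

/-! ### Auxiliary lemmas -/

lemma chain_self (N : ℕ) (lam vstar : ℝ) (W : ℕ → ℕ → ℝ) (y : Fin N → ℝ)
    (τ : ℕ → ℝ) (j : Fin N) : neuronChain N lam vstar W y τ (j : ℕ) j = 0 := by
  cases h : (j : ℕ) with
  | zero => simp [neuronChain, neuronJump, h]
  | succ k => simp [neuronChain, neuronJump, h]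

lemma chain_closed (N : ℕ) (lam vstar : ℝ) (W : ℕ → ℕ → ℝ) (y : Fin N → ℝ)
    (τ : ℕ → ℝ) (j : Fin N) :
    ∀ k, (j : ℕ) ≤ k →
      neuronChain N lam vstar W y τ k j =
        vstar - vstar * Real.exp (-(lam * ∑ m ∈ Finset.Ico (j : ℕ) k, τ m)) +
        ∑ i ∈ Finset.Ioc (j : ℕ) k, W (i + 1) ((j : ℕ) + 1) *
          Real.exp (-(lam * ∑ m ∈ Finset.Ico i k, τ m)) := by
  refine Nat.le_induction ?_ ?_
  · simp [chain_self]
  · intro k hjk ih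
    have hne : (j : ℕ) + 1 ≠ k + 2 := by omega
    have hchain : neuronChain N lam vstar W y τ (k + 1) j =
        Real.exp (-(lam * τ k)) * neuronChain N lam vstar W y τ k j
          + (1 - Real.exp (-(lam * τ k))) * vstar + W (k + 2) ((j : ℕ) + 1) := by
      simp [neuronChain, neuronJump, neuronFlow, hne, show (j : ℕ) ≠ k + 1 by omega]
    rw [hchain, ih, Finset.sum_Ioc_succ_top hjk, Finset.sum_Ico_succ_top hjk]
    have hsum : ∀ i ∈ Finset.Ioc (j : ℕ) k,
        W (i + 1) ((j : ℕ) + 1) * Real.exp (-(lam * ∑ m ∈ Finset.Ico i (k + 1), τ m)) =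
        Real.exp (-(lam * τ k)) *
          (W (i + 1) ((j : ℕ) + 1) * Real.exp (-(lam * ∑ m ∈ Finset.Ico i k, τ m))) := by
      intro i hi
      rw [Finset.sum_Ico_succ_top (Finset.mem_Ioc.mp hi).2, mul_add, neg_add, Real.exp_add]
      ring
    rw [Finset.sum_congr rfl hsum, ← Finset.mul_sum, Finset.Ico_self]
    simp only [Finset.sum_empty, mul_zero, neg_zero, Real.exp_zero, mul_one]
    have hE : ∀ S : ℝ, Real.exp (-(lam * (S + τ k))) =
        Real.exp (-(lam * S)) * Real.exp (-(lam * τ k)) := by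
      intro S; rw [← Real.exp_add]; ring_nf
    rw [hE]
    ring

def clampFun (N : ℕ) (t : Fin N → ℝ) : ℕ → ℝ := fun k => if h : k < N then t ⟨k, h⟩ else 0

lemma neuronEta_eq_clamp (N : ℕ) (lam vstar : ℝ) (W : ℕ → ℕ → ℝ) (y : Fin N → ℝ)
    (t : Fin N → ℝ) :
    neuronEta N lam vstar W y t =
      neuronFlow N lam vstar (clampFun N t (N - 1))
        (neuronChain N lam vstar W y (clampFun N t) (N - 1)) := rfl

lemma clamp_sum (N : ℕ) (t : Fin N → ℝ) (r : ℕ) :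
    ∑ m ∈ Finset.Ico r N, clampFun N t m =
      ∑ m ∈ Finset.univ.filter (fun m : Fin N => r ≤ (m : ℕ)), t m := by
  have h1 : Finset.Ico r N = (Finset.range N).filter (fun m => r ≤ m) := by
    ext m; simp [Finset.mem_Ico, and_comm]
  rw [h1, Finset.sum_filter,
    ← Fin.sum_univ_eq_sum_range (fun m => if r ≤ m then clampFun N t m else 0) N,
    Finset.sum_filter]
  refine Finset.sum_congr rfl fun m _ => ?_
  have : clampFun N t (m : ℕ) = t m := by simp [clampFun]
  simp [this]

lemma eta_closed (N : ℕ) (hN : 1 ≤ N) (lam vstar : ℝ) (W : ℕ → ℕ → ℝ) (y : Fin N → ℝ)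
    (t : Fin N → ℝ) (j : Fin N) :
    neuronEta N lam vstar W y t j =
      vstar - vstar *
          Real.exp (-(lam * ∑ m ∈ Finset.univ.filter (fun m : Fin N => (j : ℕ) ≤ (m : ℕ)), t m)) +
      ∑ i ∈ Finset.Ioc (j : ℕ) (N - 1), W (i + 1) ((j : ℕ) + 1) *
        Real.exp (-(lam * ∑ m ∈ Finset.univ.filter (fun m : Fin N => i ≤ (m : ℕ)), t m)) := by
  obtain ⟨M, rfl⟩ : ∃ M, N = M + 1 := ⟨N - 1, (Nat.succ_pred_eq_of_pos hN).symm⟩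
  have hj : (j : ℕ) ≤ M := Nat.lt_succ_iff.mp j.isLt
  rw [neuronEta_eq_clamp]
  simp only [Nat.add_sub_cancel]
  rw [show neuronFlow (M + 1) lam vstar (clampFun (M + 1) t M)
      (neuronChain (M + 1) lam vstar W y (clampFun (M + 1) t) M) j =
      Real.exp (-(lam * clampFun (M + 1) t M)) *
        neuronChain (M + 1) lam vstar W y (clampFun (M + 1) t) M j +
      (1 - Real.exp (-(lam * clampFun (M + 1) t M))) * vstar from rfl]
  rw [chain_closed (M + 1) lam vstar W y (clampFun (M + 1) t) j M hj]
  simp only [← clamp_sum]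
  rw [Finset.sum_Ico_succ_top hj]
  have hsum : ∀ i ∈ Finset.Ioc (j : ℕ) M,
      W (i + 1) ((j : ℕ) + 1) *
        Real.exp (-(lam * ∑ m ∈ Finset.Ico i (M + 1), clampFun (M + 1) t m)) =
      Real.exp (-(lam * clampFun (M + 1) t M)) * (W (i + 1) ((j : ℕ) + 1) *
        Real.exp (-(lam * ∑ m ∈ Finset.Ico i M, clampFun (M + 1) t m))) := by
    intro i hi
    rw [Finset.sum_Ico_succ_top (Finset.mem_Ioc.mp hi).2]
    have hE : ∀ S : ℝ, Real.exp (-(lam * (S + clampFun (M + 1) t M))) =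
        Real.exp (-(lam * S)) * Real.exp (-(lam * clampFun (M + 1) t M)) := by
      intro S; rw [← Real.exp_add]; ring_nf
    rw [hE]; ring
  rw [Finset.sum_congr rfl hsum, ← Finset.mul_sum]
  have hE : ∀ S : ℝ, Real.exp (-(lam * (S + clampFun (M + 1) t M))) =
      Real.exp (-(lam * S)) * Real.exp (-(lam * clampFun (M + 1) t M)) := by
    intro S; rw [← Real.exp_add]; ring_nf
  rw [hE]
  ring

def projSum (N : ℕ) (r : ℕ) : (Fin N → ℝ) →L[ℝ] ℝ :=
  ∑ m ∈ Finset.univ.filter (fun m : Fin N => r ≤ (m : ℕ)), ContinuousLinearMap.proj m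

lemma projSum_apply (N r : ℕ) (t : Fin N → ℝ) :
    projSum N r t = ∑ m ∈ Finset.univ.filter (fun m : Fin N => r ≤ (m : ℕ)), t m := by
  simp [projSum]

lemma projSum_single (N r : ℕ) (q : Fin N) :
    projSum N r (fun j' => if j' = q then (1 : ℝ) else 0) = if r ≤ (q : ℕ) then 1 else 0 := by
  rw [projSum_apply]
  simp [Finset.sum_ite_eq', Finset.mem_filter]

lemma hasFDerivAt_gExp (N : ℕ) (lam : ℝ) (r : ℕ) (t : Fin N → ℝ) :
    HasFDerivAt
      (fun t : Fin N → ℝ =>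
        Real.exp (-(lam * ∑ m ∈ Finset.univ.filter (fun m : Fin N => r ≤ (m : ℕ)), t m)))
      ((Real.exp (-(lam * ∑ m ∈ Finset.univ.filter (fun m : Fin N => r ≤ (m : ℕ)), t m))) •
        ((-lam) • projSum N r)) t := by
  have h0 : HasFDerivAt
      (fun t : Fin N → ℝ => -(lam * ∑ m ∈ Finset.univ.filter (fun m : Fin N => r ≤ (m : ℕ)), t m))
      ((-lam) • projSum N r) t := by
    have h := ((projSum N r).hasFDerivAt (x := t)).const_mul lam
    have h2 := h.neg
    simp only [projSum_apply] at h2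
    rw [← neg_smul] at h2
    exact h2
  exact h0.exp

def etaDeriv (N : ℕ) (lam vstar : ℝ) (W : ℕ → ℕ → ℝ) (t : Fin N → ℝ) :
    (Fin N → ℝ) →L[ℝ] (Fin N → ℝ) :=
  ContinuousLinearMap.pi fun j : Fin N =>
    -(vstar • ((Real.exp (-(lam * ∑ m ∈ Finset.univ.filter (fun m : Fin N => (j : ℕ) ≤ (m : ℕ)), t m))) •
        ((-lam) • projSum N (j : ℕ)))) +
    ∑ i ∈ Finset.Ioc (j : ℕ) (N - 1), (W (i + 1) ((j : ℕ) + 1)) •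
      ((Real.exp (-(lam * ∑ m ∈ Finset.univ.filter (fun m : Fin N => i ≤ (m : ℕ)), t m))) •
        ((-lam) • projSum N i))

lemma hasFDerivAt_eta (N : ℕ) (hN : 1 ≤ N) (lam vstar : ℝ) (W : ℕ → ℕ → ℝ) (y : Fin N → ℝ)
    (t : Fin N → ℝ) :
    HasFDerivAt (neuronEta N lam vstar W y) (etaDeriv N lam vstar W t) t := by
  have heq : neuronEta N lam vstar W y = fun (t : Fin N → ℝ) (j : Fin N) =>
      vstar - vstar *
          Real.exp (-(lam * ∑ m ∈ Finset.univ.filter (fun m : Fin N => (j : ℕ) ≤ (m : ℕ)), t m)) +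
      ∑ i ∈ Finset.Ioc (j : ℕ) (N - 1), W (i + 1) ((j : ℕ) + 1) *
        Real.exp (-(lam * ∑ m ∈ Finset.univ.filter (fun m : Fin N => i ≤ (m : ℕ)), t m)) :=
    funext fun t => funext fun j => eta_closed N hN lam vstar W y t j
  rw [heq]
  refine hasFDerivAt_pi.2 fun j => ?_
  exact (((hasFDerivAt_gExp N lam (j : ℕ) t).const_mul vstar).const_sub vstar).add
    (HasFDerivAt.fun_sum fun i hi => (hasFDerivAt_gExp N lam i t).const_mul _)

lemma etaDeriv_matrix (N : ℕ) (lam vstar : ℝ) (W : ℕ → ℕ → ℝ) (t : Fin N → ℝ) (p q : Fin N) :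
    LinearMap.toMatrix' ((etaDeriv N lam vstar W t : (Fin N → ℝ) →L[ℝ] (Fin N → ℝ)) :
        (Fin N → ℝ) →ₗ[ℝ] (Fin N → ℝ)) p q =
      -(vstar * (Real.exp (-(lam * ∑ m ∈ Finset.univ.filter (fun m : Fin N => (p : ℕ) ≤ (m : ℕ)), t m)) *
        (-lam * (if (p : ℕ) ≤ (q : ℕ) then 1 else 0)))) +
      ∑ i ∈ Finset.Ioc (p : ℕ) (N - 1), W (i + 1) ((p : ℕ) + 1) *
        (Real.exp (-(lam * ∑ m ∈ Finset.univ.filter (fun m : Fin N => i ≤ (m : ℕ)), t m)) *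
          (-lam * (if i ≤ (q : ℕ) then 1 else 0))) := by
  rw [LinearMap.toMatrix'_apply]
  simp only [ContinuousLinearMap.coe_coe, etaDeriv, ContinuousLinearMap.pi_apply,
    show (Pi.single q (1 : ℝ) : Fin N → ℝ) = fun j' => if j' = q then (1 : ℝ) else 0 from
      funext fun j' => Pi.single_apply q 1 j',
    ContinuousLinearMap.add_apply, ContinuousLinearMap.neg_apply, ContinuousLinearMap.smul_apply,
    ContinuousLinearMap.sum_apply, projSum_single, smul_eq_mul]

lemma det_etaDeriv (N : ℕ) (lam vstar : ℝ) (W : ℕ → ℕ → ℝ) (t : Fin N → ℝ) :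
    LinearMap.det ((etaDeriv N lam vstar W t : (Fin N → ℝ) →L[ℝ] (Fin N → ℝ)) :
        (Fin N → ℝ) →ₗ[ℝ] (Fin N → ℝ)) =
      ∏ j : Fin N, (lam * vstar *
        Real.exp (-(lam * ∑ m ∈ Finset.univ.filter (fun m : Fin N => (j : ℕ) ≤ (m : ℕ)), t m))) := by
  rw [← LinearMap.det_toMatrix']
  rw [Matrix.det_of_upperTriangular (M := LinearMap.toMatrix'
    ((etaDeriv N lam vstar W t : (Fin N → ℝ) →L[ℝ] (Fin N → ℝ)) :
      (Fin N → ℝ) →ₗ[ℝ] (Fin N → ℝ))) ?_]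
  · refine Finset.prod_congr rfl fun p _ => ?_
    rw [etaDeriv_matrix]
    rw [if_pos le_rfl]
    have hz : ∀ i ∈ Finset.Ioc (p : ℕ) (N - 1),
        W (i + 1) ((p : ℕ) + 1) *
          (Real.exp (-(lam * ∑ m ∈ Finset.univ.filter (fun m : Fin N => i ≤ (m : ℕ)), t m)) *
            (-lam * (if i ≤ (p : ℕ) then 1 else 0))) = 0 := by
      intro i hi
      rw [if_neg (by have := (Finset.mem_Ioc.mp hi).1; omega)]
      ring
    rw [Finset.sum_congr rfl hz]
    simp only [Finset.sum_const, smul_zero, Finset.sum_const_zero]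
    ring
  · intro p q hqp
    rw [etaDeriv_matrix]
    rw [if_neg (by exact fun h => absurd (lt_of_le_of_lt h hqp) (lt_irrefl _))]
    have hz : ∀ i ∈ Finset.Ioc (p : ℕ) (N - 1),
        W (i + 1) ((p : ℕ) + 1) *
          (Real.exp (-(lam * ∑ m ∈ Finset.univ.filter (fun m : Fin N => i ≤ (m : ℕ)), t m)) *
            (-lam * (if i ≤ (q : ℕ) then 1 else 0))) = 0 := by
      intro i hi
      have h1 := (Finset.mem_Ioc.mp hi).1
      have h2 : (q : ℕ) < (p : ℕ) := hqp
      rw [if_neg (by omega)]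
      ring
    rw [Finset.sum_congr rfl hz]
    simp

lemma prod_convert (N : ℕ) (lam vstar : ℝ) (t : Fin N → ℝ) :
    ∏ j : Fin N, (lam * vstar *
        Real.exp (-(lam * ∑ m ∈ Finset.univ.filter (fun m : Fin N => (j : ℕ) ≤ (m : ℕ)), t m))) =
      lam ^ N * vstar ^ N *
        ∏ k ∈ Finset.range N,
          Real.exp (-(lam * ((∑ j, t j) -
            ∑ j ∈ Finset.univ.filter (fun j : Fin N => (j : ℕ) < k), t j))) := by
  have hsum : ∀ j : Fin N,
      ∑ m ∈ Finset.univ.filter (fun m : Fin N => (j : ℕ) ≤ (m : ℕ)), t m =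
        (∑ m, t m) - ∑ m ∈ Finset.univ.filter (fun m : Fin N => (m : ℕ) < (j : ℕ)), t m := by
    intro j
    rw [eq_sub_iff_add_eq, ←
      Finset.sum_filter_add_sum_filter_not Finset.univ (fun m : Fin N => (j : ℕ) ≤ (m : ℕ)) t]
    congr 1
    apply Finset.sum_congr _ fun _ _ => rfl
    ext m
    simp [not_le]
  rw [← Fin.prod_univ_eq_prod_range (fun k => Real.exp (-(lam * ((∑ j, t j) -
      ∑ j ∈ Finset.univ.filter (fun j : Fin N => (j : ℕ) < k), t j)))) N]
  rw [Finset.prod_mul_distrib, Finset.prod_mul_distrib]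
  simp only [Finset.prod_const, Finset.card_univ, Fintype.card_fin]
  refine congrArg _ (Finset.prod_congr rfl fun j _ => ?_)
  rw [hsum j]

/-- the map `t ↦ η(t)` is differentiable on `[0,∞)^N` and its Jacobian
determinant equals `λ^N (v*)^N ∏_{k=1}^N e^{-λ(s_N - s_{k-1})}` where `s_k = t_1 + ⋯ + t_k`;
in particular it is strictly positive, hence never vanishes. -/
theorem neuronEta_jacobian_det
    (N : ℕ) (hN : 1 ≤ N) (lam vstar : ℝ) (hlam : 0 < lam) (hvstar : 0 < vstar)
    (W : ℕ → ℕ → ℝ) (hW : ∀ i j, 0 ≤ W i j) (y : Fin N → ℝ) :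
    ∀ t : Fin N → ℝ, (∀ k, 0 ≤ t k) →
      DifferentiableAt ℝ (neuronEta N lam vstar W y) t ∧
      LinearMap.det ((fderiv ℝ (neuronEta N lam vstar W y) t) :
          (Fin N → ℝ) →ₗ[ℝ] (Fin N → ℝ))
        = lam ^ N * vstar ^ N *
            ∏ k ∈ Finset.range N,
              Real.exp (-(lam * ((∑ j, t j) -
                ∑ j ∈ Finset.univ.filter (fun j : Fin N => (j : ℕ) < k), t j))) ∧
      0 < LinearMap.det ((fderiv ℝ (neuronEta N lam vstar W y) t) :
          (Fin N → ℝ) →ₗ[ℝ] (Fin N → ℝ)) := by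
  intro t ht
  have hFD := hasFDerivAt_eta N hN lam vstar W y t
  have hfd := hFD.fderiv
  refine ⟨hFD.differentiableAt, ?_, ?_⟩
  · rw [hfd, det_etaDeriv, prod_convert]
  · rw [hfd, det_etaDeriv, prod_convert]
    exact mul_pos (mul_pos (pow_pos hlam N) (pow_pos hvstar N))
      (Finset.prod_pos fun _ _ => Real.exp_pos _)
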